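/- In the setting of a time-inhomogeneous Markov jump process conditioned on its absorption time τ = x, the conditional process Y(s) = X(s)|τ=x is again a Markov jump process on {1,...,p} whose transition intensities are μ̃_{ij}(t|x) = μ_{ij}(t) · (e_j' P̄(t,x) t(x)) / (eᵢ' P̄(t,x) t(x)) for i ≠ j, i.e., the limit as h↓0 of p̃_{ij}(t,t+h|x)/h equals this expression. -/

import Mathlib

open Matrix

attribute [local instance] Matrix.linftyOpNormedRing Matrix.linftyOpNormedAlgebra

/-- The process conditioned on its absorption time `τ = x` has transition
intensities `μ̃_{ij}(t|x) = μ_{ij}(t) · e_j' P̄(t,x) t(x) / (eᵢ' P̄(t,x) t(x))` for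
`i ≠ j`: the limit as `h ↓ 0` of `p̃_{ij}(t, t+h | x) / h` equals this expression, where
`p̃_{ij}(t,s|x) = eᵢ' P̄(t,s) e_j · e_j' P̄(s,x) t(x) / (eᵢ' P̄(t,x) t(x))` is the
conditional transition probability, `μ_{ij}(t) = T(t)_{ij}`, and `P̄` is the product
integral of `T` (continuous in its endpoints, `P̄(t,t) = I`, `∂_s P̄(t,s) = P̄(t,s)T(s)`). -/
theorem conditional_intensity_given_absorption
    {p : ℕ} (P : ℝ → ℝ → Matrix (Fin p) (Fin p) ℝ)
    (T : ℝ → Matrix (Fin p) (Fin p) ℝ)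
    (tv : ℝ → Fin p → ℝ) (htv : ∀ x, tv x = -(T x *ᵥ (1 : Fin p → ℝ)))
    (t x : ℝ) (htx : t < x) (i j : Fin p) (hij : i ≠ j)
    -- Kolmogorov forward equation in the second argument:
    (hode : ∀ u : ℝ, HasDerivAt (fun r => P t r) (P t u * T u) u)
    -- the product integral starts at the identity:
    (hid : P t t = 1)
    -- continuity of the product integral in its first endpoint:
    (hcont : ContinuousAt (fun u => (P u x *ᵥ tv x) j) t)
    (hden : (P t x *ᵥ tv x) i ≠ 0) :
    Filter.Tendsto
      (fun h : ℝ =>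
        (P t (t + h) i j * ((P (t + h) x *ᵥ tv x) j) / ((P t x *ᵥ tv x) i)) / h)
      (nhdsWithin 0 (Set.Ioi 0))
      (nhds (T t i j * ((P t x *ᵥ tv x) j) / ((P t x *ᵥ tv x) i))) := by

  -- entrywise derivative of r ↦ P t r at t
  have hL : HasDerivAt (fun r => P t r i j) (T t i j) t := by
    let L : Matrix (Fin p) (Fin p) ℝ →ₗ[ℝ] ℝ :=
      { toFun := fun M => M i j, map_add' := fun _ _ => rfl, map_smul' := fun _ _ => rfl }
    have hc := (LinearMap.toContinuousLinearMap L).hasFDerivAt.comp_hasDerivAt t (hode t)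
    have : L (P t t * T t) = T t i j := by
      show (P t t * T t) i j = T t i j
      rw [hid, one_mul]
    have hc' : HasDerivAt (fun r => P t r i j) (L (P t t * T t)) t := hc
    rw [this] at hc'
    exact hc'
  have hzero : P t t i j = 0 := by rw [hid]; exact Matrix.one_apply_ne hij
  -- limit of difference quotient along h → 0⁺
  have h1 : Filter.Tendsto (fun h : ℝ => P t (t + h) i j / h)
      (nhdsWithin 0 (Set.Ioi 0)) (nhds (T t i j)) := by
    have hslope := hasDerivAt_iff_tendsto_slope.mp hL
    have hmap : Filter.Tendsto (fun h : ℝ => t + h)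
        (nhdsWithin 0 (Set.Ioi 0)) (nhdsWithin t {t}ᶜ) := by
      apply tendsto_nhdsWithin_of_tendsto_nhds_of_eventually_within
      · have : Filter.Tendsto (fun h : ℝ => t + h) (nhds 0) (nhds t) := by
          simpa using (continuous_add_left t).tendsto (0 : ℝ)
        exact this.mono_left nhdsWithin_le_nhds
      · filter_upwards [self_mem_nhdsWithin] with h hh
        simp only [Set.mem_Ioi] at hh
        simp only [Set.mem_compl_iff, Set.mem_singleton_iff]
        intro hc; linarith
    have := hslope.comp hmap
    refine this.congr fun h => ?_
    simp [slope_def_field, hzero, div_eq_mul_inv, mul_comm]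
  -- limit of the continuous factor
  have h2 : Filter.Tendsto (fun h : ℝ => (P (t + h) x *ᵥ tv x) j)
      (nhdsWithin 0 (Set.Ioi 0)) (nhds ((P t x *ᵥ tv x) j)) := by
    have hmap : Filter.Tendsto (fun h : ℝ => t + h)
        (nhdsWithin 0 (Set.Ioi 0)) (nhds t) := by
      have : Filter.Tendsto (fun h : ℝ => t + h) (nhds 0) (nhds t) := by
        simpa using (continuous_add_left t).tendsto (0 : ℝ)
      exact this.mono_left nhdsWithin_le_nhds
    exact hcont.tendsto.comp hmap
  have hmain := (h1.mul (h2.div_const ((P t x *ᵥ tv x) i)))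
  rw [mul_div_assoc]
  exact hmain.congr fun h => by ring
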